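/- Let 𝒜 be a finite nonempty set, μ a translation invariant probability measure on 𝒜^ℤ, and m ≥ 1 an integer. With G_k = 2^k ℤ and G_k^− = {j · 2^k : j < 0}, let B be any finite subset of G_m^− and, for 1 ≤ k ≤ m, let B_k be any finite subset of ({2^{k−1}} + G_k^−) ∪ G_k. Then the entropy density satisfies the upper bound s_μ ≤ (1/2^m) · S( {0} | B ) + Σ_{k=1}^m (1/2^k) · S( {2^{k−1}} | B_k ). -/

import Mathlib

open MeasureTheory Real Filter Pointwise

/-- Probability of the cylinder set determined by the configuration `x` on the finite
set `Λ ⊆ ℤ`. -/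
noncomputable def cylProb1 {𝒜 : Type*} [MeasurableSpace 𝒜]
    (μ : Measure (ℤ → 𝒜)) (Λ : Finset ℤ) (x : Λ → 𝒜) : ℝ :=
  (μ {ω | ∀ v : Λ, ω v.1 = x v}).toReal

/-- The entropy `S(Λ)` of a finite set of sites `Λ ⊆ ℤ` with respect to `μ`. -/
noncomputable def entS1 {𝒜 : Type*} [Fintype 𝒜] [MeasurableSpace 𝒜]
    (μ : Measure (ℤ → 𝒜)) (Λ : Finset ℤ) : ℝ :=
  -∑ x : (Λ → 𝒜), cylProb1 μ Λ x * Real.log (cylProb1 μ Λ x)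

/-- The conditional entropy `S(Λ | Λ')` (terms with zero probability vanish since
`Real.log 0 = 0` and `0 * log 0 = 0`). -/
noncomputable def condEnt1 {𝒜 : Type*} [Fintype 𝒜] [MeasurableSpace 𝒜]
    (μ : Measure (ℤ → 𝒜)) (Λ Λ' : Finset ℤ) : ℝ :=
  -∑ x : ((Λ ∪ Λ' : Finset ℤ) → 𝒜),
      cylProb1 μ (Λ ∪ Λ') x *
        Real.log (cylProb1 μ (Λ ∪ Λ') x /
          cylProb1 μ Λ' (fun v => x ⟨v.1, Finset.mem_union_right Λ v.2⟩))

/-- `μ` is translation invariant: it is preserved by the shift `σ`, `(σx)(i) = x(i+1)`. -/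
def TransInv1 {𝒜 : Type*} [MeasurableSpace 𝒜] (μ : Measure (ℤ → 𝒜)) : Prop :=
  μ.map (fun ω (i : ℤ) => ω (i + 1)) = μ

open Classical in
/-- The finite set `Λ' ∩ [-n, n]` for a (possibly infinite) `Λ' ⊆ ℤ`. -/
noncomputable def interBox1 (Λ' : Set ℤ) (n : ℕ) : Finset ℤ :=
  (Finset.Icc (-(n : ℤ)) (n : ℤ)).filter (· ∈ Λ')

section Basics
open Classical

set_option linter.unusedSectionVars false

variable {𝒜 : Type*} [Fintype 𝒜] [Nonempty 𝒜] [MeasurableSpace 𝒜] [MeasurableSingletonClass 𝒜]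
variable (μ : Measure (ℤ → 𝒜)) [IsProbabilityMeasure μ]

/-- the cylinder set -/
def cylSet (Λ : Finset ℤ) (x : Λ → 𝒜) : Set (ℤ → 𝒜) := {ω | ∀ v : Λ, ω v.1 = x v}

lemma measurableSet_cylSet (Λ : Finset ℤ) (x : Λ → 𝒜) : MeasurableSet (cylSet (𝒜 := 𝒜) Λ x) := by
  have h : cylSet (𝒜 := 𝒜) Λ x = ⋂ v : Λ, {ω : ℤ → 𝒜 | ω v.1 = x v} := by
    ext ω; simp [cylSet]
  rw [h]
  refine MeasurableSet.iInter fun v => ?_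
  have h2 : {ω : ℤ → 𝒜 | ω v.1 = x v} = (fun ω : ℤ → 𝒜 => ω v.1) ⁻¹' {x v} := rfl
  rw [h2]
  exact measurable_pi_apply _ (measurableSet_singleton _)

lemma cylProb1_def (Λ : Finset ℤ) (x : Λ → 𝒜) :
    cylProb1 μ Λ x = (μ (cylSet Λ x)).toReal := rfl

lemma cylProb1_nonneg (Λ : Finset ℤ) (x : Λ → 𝒜) : 0 ≤ cylProb1 μ Λ x :=
  ENNReal.toReal_nonneg

lemma cylProb1_le_one (Λ : Finset ℤ) (x : Λ → 𝒜) : cylProb1 μ Λ x ≤ 1 := by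
  rw [cylProb1_def]
  have := measure_mono (μ := μ) (Set.subset_univ (cylSet Λ x))
  calc (μ (cylSet Λ x)).toReal ≤ (μ Set.univ).toReal :=
        ENNReal.toReal_mono (by simp [measure_ne_top]) this
    _ = 1 := by simp

/-- decomposition of the measure of a measurable set over the cylinders of `Λ''`. -/
lemma measure_eq_sum_inter (s : Set (ℤ → 𝒜)) (hs : MeasurableSet s) (Λ'' : Finset ℤ) :
    (μ s).toReal = ∑ y : Λ'' → 𝒜, (μ (s ∩ cylSet Λ'' y)).toReal := by
  have hdecomp : s = ⋃ y : Λ'' → 𝒜, s ∩ cylSet Λ'' y := by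
    ext ω
    constructor
    · intro hω
      exact Set.mem_iUnion.2 ⟨fun v => ω v.1, hω, fun v => rfl⟩
    · rintro hω
      rcases Set.mem_iUnion.1 hω with ⟨y, hy, -⟩
      exact hy
  have hdisj : Pairwise (Function.onFun Disjoint fun y : Λ'' → 𝒜 => s ∩ cylSet Λ'' y) := by
    intro y z hyz
    refine Set.disjoint_left.2 ?_
    rintro ω ⟨-, hy⟩ ⟨-, hz⟩
    exact hyz (funext fun v => (hy v).symm.trans (hz v))
  have hmeas : ∀ y : Λ'' → 𝒜, MeasurableSet (s ∩ cylSet Λ'' y) := fun y =>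
    hs.inter (measurableSet_cylSet Λ'' y)
  calc (μ s).toReal = (μ (⋃ y : Λ'' → 𝒜, s ∩ cylSet Λ'' y)).toReal := by rw [← hdecomp]
    _ = (∑ y : Λ'' → 𝒜, μ (s ∩ cylSet Λ'' y)).toReal := by
        rw [measure_iUnion hdisj hmeas, tsum_fintype]
    _ = ∑ y : Λ'' → 𝒜, (μ (s ∩ cylSet Λ'' y)).toReal := by
        rw [ENNReal.toReal_sum]
        intro y _
        exact measure_ne_top μ _

/-- marginal consistency -/
lemma cylProb1_eq_sum {Λ Λ'' : Finset ℤ} (h : Λ ⊆ Λ'') (x : Λ → 𝒜) :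
    cylProb1 μ Λ x =
      ∑ y : Λ'' → 𝒜,
        if (∀ v : Λ, y ⟨v.1, h v.2⟩ = x v) then cylProb1 μ Λ'' y else 0 := by
  rw [cylProb1_def, measure_eq_sum_inter μ _ (measurableSet_cylSet Λ x) Λ'']
  refine Finset.sum_congr rfl fun y _ => ?_
  by_cases hc : ∀ v : Λ, y ⟨v.1, h v.2⟩ = x v
  · rw [if_pos hc]
    have : cylSet Λ x ∩ cylSet Λ'' y = cylSet Λ'' y := by
      apply Set.inter_eq_self_of_subset_right
      intro ω hω v
      exact (hω ⟨v.1, h v.2⟩).trans (hc v)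
    rw [this, cylProb1_def]
  · rw [if_neg hc]
    push_neg at hc
    obtain ⟨v, hv⟩ := hc
    have : cylSet Λ x ∩ cylSet Λ'' y = ∅ := by
      ext ω
      simp only [Set.mem_inter_iff, Set.mem_empty_iff_false, iff_false]
      rintro ⟨h1, h2⟩
      exact hv ((h2 ⟨v.1, h v.2⟩).symm ▸ (h1 v))
    simp [this]

lemma sum_cylProb1 (Λ : Finset ℤ) : ∑ x : Λ → 𝒜, cylProb1 μ Λ x = 1 := by
  have h := measure_eq_sum_inter μ Set.univ MeasurableSet.univ Λ
  simp only [Set.univ_inter] at h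
  calc ∑ x : Λ → 𝒜, cylProb1 μ Λ x = ∑ x : Λ → 𝒜, (μ (cylSet Λ x)).toReal := rfl
    _ = (μ Set.univ).toReal := h.symm
    _ = 1 := by simp


set_option linter.unusedSectionVars false
set_option maxHeartbeats 2000000

/-- Gibbs-type inequality: entropy of a probability vector is at most `log card`. -/
lemma neg_sum_mul_log_le_log_card {ι : Type*} [Fintype ι] (p : ι → ℝ)
    (h0 : ∀ i, 0 ≤ p i) (h1 : ∑ i, p i = 1) :
    -∑ i, p i * Real.log (p i) ≤ Real.log (Fintype.card ι) := by
  have hne : Nonempty ι := by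
    by_contra h
    have : IsEmpty ι := not_nonempty_iff.mp h
    simp at h1
  have hcard : 0 < Fintype.card ι := Fintype.card_pos
  set n : ℝ := (Fintype.card ι : ℝ) with hn
  have hnpos : (0:ℝ) < n := by rw [hn]; exact_mod_cast hcard
  have key : ∀ i, -(p i * Real.log (p i)) - p i * Real.log n ≤ 1 / n - p i := by
    intro i
    by_cases hpi : p i = 0
    · simp [hpi]; positivity
    · have hpi' : 0 < p i := lt_of_le_of_ne (h0 i) (Ne.symm hpi)
      have hx : (0:ℝ) < 1 / (p i * n) := by positivity
      have hlog := Real.log_le_sub_one_of_pos hx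
      have hrw : Real.log (1 / (p i * n)) = -(Real.log (p i) + Real.log n) := by
        rw [Real.log_div one_ne_zero (by positivity), Real.log_one,
          Real.log_mul (ne_of_gt hpi') (ne_of_gt hnpos)]
        ring
      rw [hrw] at hlog
      have := mul_le_mul_of_nonneg_left hlog (le_of_lt hpi')
      calc -(p i * Real.log (p i)) - p i * Real.log n
          = p i * -(Real.log (p i) + Real.log n) := by ring
        _ ≤ p i * (1 / (p i * n) - 1) := this
        _ = 1 / n - p i := by field_simp
  have hsum := Finset.sum_le_sum (fun i (_ : i ∈ Finset.univ) => key i)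
  rw [Finset.sum_sub_distrib] at hsum
  have e1 : ∑ i, p i * Real.log n = Real.log n := by
    rw [← Finset.sum_mul, h1, one_mul]
  have e2 : ∑ _i : ι, (1 / n : ℝ) = 1 := by
    rw [Finset.sum_const, Finset.card_univ, nsmul_eq_mul]
    field_simp
    exact hn.symm
  rw [Finset.sum_sub_distrib, e1, h1, e2] at hsum
  have e3 : ∑ i, -(p i * Real.log (p i)) = -∑ i, p i * Real.log (p i) := by
    rw [Finset.sum_neg_distrib]
  rw [e3] at hsum
  linarith

/-- Abstract statement that conditioning on more information reduces conditional entropy. -/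
lemma abstract_cond_mono {ι α β γ : Type*} [Fintype ι] [Fintype α] [Fintype β] [Fintype γ]
    [DecidableEq α] [DecidableEq β] [DecidableEq γ]
    (p : ι → ℝ) (hp : ∀ i, 0 ≤ p i)
    (A : ι → α) (Y : ι → β) (Z : β → γ)
    (hinj : ∀ i j, A i = A j → Y i = Y j → i = j) :
    -∑ i, p i * Real.log (p i / ∑ j, if Y j = Y i then p j else 0)
      ≤ -∑ i, p i * Real.log
          ((∑ j, if A j = A i ∧ Z (Y j) = Z (Y i) then p j else 0)
            / ∑ j, if Z (Y j) = Z (Y i) then p j else 0) := by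
  set qy : ι → ℝ := fun i => ∑ j, if Y j = Y i then p j else 0 with hqydef
  set paz : ι → ℝ := fun i => ∑ j, if A j = A i ∧ Z (Y j) = Z (Y i) then p j else 0 with hpazdef
  set qz : ι → ℝ := fun i => ∑ j, if Z (Y j) = Z (Y i) then p j else 0 with hqzdef
  have ite_nonneg : ∀ (P : Prop) [Decidable P] (x : ℝ), 0 ≤ x → 0 ≤ (if P then x else 0) := by
    intro P _ x hx; split <;> simp [hx]
  have hqy_nonneg : ∀ i, 0 ≤ qy i := fun i =>
    Finset.sum_nonneg fun j _ => ite_nonneg _ _ (hp j)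
  have hpaz_nonneg : ∀ i, 0 ≤ paz i := fun i =>
    Finset.sum_nonneg fun j _ => ite_nonneg _ _ (hp j)
  have hqz_nonneg : ∀ i, 0 ≤ qz i := fun i =>
    Finset.sum_nonneg fun j _ => ite_nonneg _ _ (hp j)
  have hp_le_qy : ∀ i, p i ≤ qy i := by
    intro i
    have := Finset.single_le_sum (f := fun j => if Y j = Y i then p j else 0)
      (fun j _ => ite_nonneg _ _ (hp j)) (Finset.mem_univ i)
    simpa using this
  have hp_le_paz : ∀ i, p i ≤ paz i := by
    intro i
    have := Finset.single_le_sum (f := fun j => if A j = A i ∧ Z (Y j) = Z (Y i) then p j else 0)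
      (fun j _ => ite_nonneg _ _ (hp j)) (Finset.mem_univ i)
    simpa using this
  have hqy_le_qz : ∀ i, qy i ≤ qz i := by
    intro i
    refine Finset.sum_le_sum fun j _ => ?_
    by_cases h : Y j = Y i
    · rw [if_pos h, if_pos (congrArg Z h)]
    · rw [if_neg h]; exact ite_nonneg _ _ (hp j)
  rw [neg_le_neg_iff]
  rw [← sub_nonpos, ← Finset.sum_sub_distrib]
  -- per-term bound
  have hterm : ∀ i, p i * Real.log (paz i / qz i) - p i * Real.log (p i / qy i)
      ≤ paz i * qy i / qz i - p i := by
    intro i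
    by_cases hpi : p i = 0
    · rw [hpi]
      simp only [zero_mul, sub_zero, zero_sub, sub_zero]
      have : 0 ≤ paz i * qy i / qz i :=
        div_nonneg (mul_nonneg (hpaz_nonneg i) (hqy_nonneg i)) (hqz_nonneg i)
      linarith
    · have hpi' : 0 < p i := lt_of_le_of_ne (hp i) (Ne.symm hpi)
      have hqy' : 0 < qy i := lt_of_lt_of_le hpi' (hp_le_qy i)
      have hqz' : 0 < qz i := lt_of_lt_of_le hqy' (hqy_le_qz i)
      have hpaz' : 0 < paz i := lt_of_lt_of_le hpi' (hp_le_paz i)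
      set X : ℝ := paz i * qy i / (qz i * p i) with hX
      have hXpos : 0 < X := by positivity
      have h1 : Real.log (paz i / qz i) - Real.log (p i / qy i) = Real.log X := by
        rw [Real.log_div (ne_of_gt hpaz') (ne_of_gt hqz'),
          Real.log_div (ne_of_gt hpi') (ne_of_gt hqy'), hX,
          Real.log_div (by positivity) (by positivity),
          Real.log_mul (ne_of_gt hpaz') (ne_of_gt hqy'),
          Real.log_mul (ne_of_gt hqz') (ne_of_gt hpi')]
        ring
      have h2 := Real.log_le_sub_one_of_pos hXpos
      calc p i * Real.log (paz i / qz i) - p i * Real.log (p i / qy i)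
          = p i * Real.log X := by rw [← mul_sub, h1]
        _ ≤ p i * (X - 1) := mul_le_mul_of_nonneg_left h2 (le_of_lt hpi')
        _ = paz i * qy i / qz i - p i := by
            rw [hX]; field_simp
  refine le_trans (Finset.sum_le_sum fun i _ => hterm i) ?_
  rw [Finset.sum_sub_distrib, sub_nonpos]
  -- now show  ∑ i, paz i * qy i / qz i ≤ ∑ i, p i
  set w : α → γ → ℝ := fun a c => ∑ j, if A j = a ∧ Z (Y j) = c then p j else 0 with hwdef
  set vz : γ → ℝ := fun c => ∑ j, if Z (Y j) = c then p j else 0 with hvzdef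
  set vy : β → ℝ := fun b => ∑ j, if Y j = b then p j else 0 with hvydef
  have hvy_nonneg : ∀ b, 0 ≤ vy b := fun b =>
    Finset.sum_nonneg fun j _ => ite_nonneg _ _ (hp j)
  have hw_nonneg : ∀ a c, 0 ≤ w a c := fun a c =>
    Finset.sum_nonneg fun j _ => ite_nonneg _ _ (hp j)
  have hvz_nonneg : ∀ c, 0 ≤ vz c := fun c =>
    Finset.sum_nonneg fun j _ => ite_nonneg _ _ (hp j)
  set g : α × β → ℝ := fun ab => w ab.1 (Z ab.2) * vy ab.2 / vz (Z ab.2) with hgdef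
  have hg_nonneg : ∀ ab, 0 ≤ g ab := fun ab =>
    div_nonneg (mul_nonneg (hw_nonneg _ _) (hvy_nonneg _)) (hvz_nonneg _)
  have e0 : ∀ i, paz i * qy i / qz i = g (A i, Y i) := fun i => rfl
  have step1 : ∑ i, paz i * qy i / qz i ≤ ∑ ab : α × β, g ab := by
    rw [Finset.sum_congr rfl fun i _ => e0 i]
    have hinj' : ∀ x ∈ Finset.univ (α := ι), ∀ y ∈ Finset.univ,
        (fun i => (A i, Y i)) x = (fun i => (A i, Y i)) y → x = y := by
      intro x _ y _ hxy
      simp only [Prod.mk.injEq] at hxy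
      exact hinj x y hxy.1 hxy.2
    calc ∑ i : ι, g (A i, Y i)
        = ∑ ab ∈ Finset.univ.image (fun i => (A i, Y i)), g ab :=
          (Finset.sum_image hinj').symm
      _ ≤ ∑ ab : α × β, g ab :=
          Finset.sum_le_sum_of_subset_of_nonneg (Finset.subset_univ _)
            (fun ab _ _ => hg_nonneg ab)
  refine le_trans step1 ?_
  have sumw : ∀ c, ∑ a, w a c = vz c := by
    intro c
    rw [hwdef, hvzdef]
    rw [Finset.sum_comm]
    refine Finset.sum_congr rfl fun j _ => ?_
    by_cases hQ : Z (Y j) = c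
    · simp only [hQ, and_true]
      rw [Finset.sum_ite_eq]
      simp
    · simp [hQ]
  have step2 : ∑ ab : α × β, g ab = ∑ b, vz (Z b) * vy b / vz (Z b) := by
    rw [Fintype.sum_prod_type_right]
    refine Finset.sum_congr rfl fun b _ => ?_
    rw [hgdef]
    simp only []
    rw [← Finset.sum_div, ← Finset.sum_mul, sumw]
  rw [step2]
  have step3 : ∀ b, vz (Z b) * vy b / vz (Z b) ≤ vy b := by
    intro b
    by_cases hz : vz (Z b) = 0
    · rw [hz, zero_mul, zero_div]
      exact hvy_nonneg b
    · rw [mul_comm (vz (Z b)) (vy b), mul_div_assoc, div_self hz, mul_one]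
  refine le_trans (Finset.sum_le_sum fun b _ => step3 b) ?_
  have step4 : ∑ b, vy b = ∑ j, p j := by
    rw [hvydef, Finset.sum_comm]
    refine Finset.sum_congr rfl fun j _ => ?_
    rw [Finset.sum_ite_eq]
    simp
  rw [step4]


lemma cylProb1_mono {Λ Λ'' : Finset ℤ} (h : Λ ⊆ Λ'') (y : Λ'' → 𝒜) :
    cylProb1 μ Λ'' y ≤ cylProb1 μ Λ (fun v => y ⟨v.1, h v.2⟩) := by
  rw [cylProb1_def, cylProb1_def]
  refine ENNReal.toReal_mono (measure_ne_top μ _) (measure_mono ?_)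
  intro ω hω v
  exact hω ⟨v.1, h v.2⟩

/-- grouping lemma -/
lemma sum_cylProb1_mul {Δ Λ'' : Finset ℤ} (h : Δ ⊆ Λ'') (G : (Δ → 𝒜) → ℝ) :
    ∑ w : Δ → 𝒜, cylProb1 μ Δ w * G w
      = ∑ y : Λ'' → 𝒜, cylProb1 μ Λ'' y * G (fun v => y ⟨v.1, h v.2⟩) := by
  calc ∑ w : Δ → 𝒜, cylProb1 μ Δ w * G w
      = ∑ w : Δ → 𝒜, ∑ y : Λ'' → 𝒜,
          (if (fun v : Δ => y ⟨v.1, h v.2⟩) = w then cylProb1 μ Λ'' y * G w else 0) := by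
        refine Finset.sum_congr rfl fun w _ => ?_
        rw [cylProb1_eq_sum μ h w, Finset.sum_mul]
        refine Finset.sum_congr rfl fun y _ => ?_
        rw [ite_mul, zero_mul]
        exact if_congr funext_iff.symm rfl rfl
    _ = ∑ y : Λ'' → 𝒜, ∑ w : Δ → 𝒜,
          (if (fun v : Δ => y ⟨v.1, h v.2⟩) = w then cylProb1 μ Λ'' y * G w else 0) :=
        Finset.sum_comm
    _ = ∑ y : Λ'' → 𝒜, cylProb1 μ Λ'' y * G (fun v => y ⟨v.1, h v.2⟩) := by
        refine Finset.sum_congr rfl fun y _ => ?_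
        rw [Finset.sum_ite_eq]
        simp

/-- chain rule -/
lemma condEnt1_eq (Λ Λ' : Finset ℤ) :
    condEnt1 μ Λ Λ' = entS1 μ (Λ ∪ Λ') - entS1 μ Λ' := by
  have hsub : Λ' ⊆ Λ ∪ Λ' := Finset.subset_union_right
  have key : ∀ y : ((Λ ∪ Λ' : Finset ℤ) → 𝒜),
      cylProb1 μ (Λ ∪ Λ') y * Real.log (cylProb1 μ (Λ ∪ Λ') y /
          cylProb1 μ Λ' (fun v => y ⟨v.1, Finset.mem_union_right Λ v.2⟩))
      = cylProb1 μ (Λ ∪ Λ') y * Real.log (cylProb1 μ (Λ ∪ Λ') y)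
        - cylProb1 μ (Λ ∪ Λ') y *
            Real.log (cylProb1 μ Λ' (fun v => y ⟨v.1, Finset.mem_union_right Λ v.2⟩)) := by
    intro y
    by_cases hy : cylProb1 μ (Λ ∪ Λ') y = 0
    · simp [hy]
    · have h1 : 0 < cylProb1 μ (Λ ∪ Λ') y :=
        lt_of_le_of_ne (cylProb1_nonneg μ _ _) (Ne.symm hy)
      have h2 : 0 < cylProb1 μ Λ' (fun v => y ⟨v.1, Finset.mem_union_right Λ v.2⟩) :=
        lt_of_lt_of_le h1 (cylProb1_mono μ hsub y)
      rw [Real.log_div (ne_of_gt h1) (ne_of_gt h2), mul_sub]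
  unfold condEnt1
  rw [Finset.sum_congr rfl fun y _ => key y, Finset.sum_sub_distrib]
  have hgroup := sum_cylProb1_mul μ hsub (fun w => Real.log (cylProb1 μ Λ' w))
  unfold entS1
  rw [← hgroup]
  ring

lemma entS1_nonneg (Λ : Finset ℤ) : 0 ≤ entS1 μ Λ := by
  unfold entS1
  rw [neg_nonneg]
  refine Finset.sum_nonpos fun x _ => ?_
  have h0 := cylProb1_nonneg μ Λ x
  have h1 := cylProb1_le_one μ Λ x
  have := Real.log_nonpos h0 h1
  nlinarith

lemma condEnt1_nonneg (Λ Λ' : Finset ℤ) : 0 ≤ condEnt1 μ Λ Λ' := by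
  unfold condEnt1
  rw [neg_nonneg]
  refine Finset.sum_nonpos fun y _ => ?_
  by_cases hy : cylProb1 μ (Λ ∪ Λ') y = 0
  · simp [hy]
  · have h1 : 0 < cylProb1 μ (Λ ∪ Λ') y :=
      lt_of_le_of_ne (cylProb1_nonneg μ _ _) (Ne.symm hy)
    have h2 := cylProb1_mono μ (Finset.subset_union_right : Λ' ⊆ Λ ∪ Λ') y
    have hlog : Real.log (cylProb1 μ (Λ ∪ Λ') y /
        cylProb1 μ Λ' (fun v => y ⟨v.1, Finset.mem_union_right Λ v.2⟩)) ≤ 0 := by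
      apply Real.log_nonpos
      · exact div_nonneg (cylProb1_nonneg μ _ _) (cylProb1_nonneg μ _ _)
      · rw [div_le_one (lt_of_lt_of_le h1 h2)]
        exact h2
    nlinarith

lemma entS1_empty : entS1 μ (∅ : Finset ℤ) = 0 := by
  unfold entS1
  have hz : ∀ x : ((∅ : Finset ℤ) → 𝒜), cylProb1 μ ∅ x * Real.log (cylProb1 μ ∅ x) = 0 := by
    intro x
    have h1 : cylProb1 μ ∅ x = 1 := by
      rw [cylProb1_def]
      have : cylSet (∅ : Finset ℤ) x = Set.univ :=
        Set.eq_univ_of_forall fun ω v => absurd v.2 (Finset.notMem_empty _)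
      rw [this]; simp
    rw [h1]; simp
  rw [Finset.sum_congr rfl fun x _ => hz x]
  simp

/-- conditional entropy is monotone decreasing in the conditioning set -/
lemma condEnt1_mono (Λ : Finset ℤ) {C Λ' : Finset ℤ} (hC : C ⊆ Λ') :
    condEnt1 μ Λ Λ' ≤ condEnt1 μ Λ C := by
  have hUC : Λ ∪ C ⊆ Λ ∪ Λ' := Finset.union_subset_union_right hC
  have hCU : C ⊆ Λ ∪ Λ' := hC.trans Finset.subset_union_right
  set p : ((Λ ∪ Λ' : Finset ℤ) → 𝒜) → ℝ := cylProb1 μ (Λ ∪ Λ') with hpdef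
  set A : ((Λ ∪ Λ' : Finset ℤ) → 𝒜) → (Λ → 𝒜) :=
    fun y v => y ⟨v.1, Finset.mem_union_left Λ' v.2⟩ with hAdef
  set Y : ((Λ ∪ Λ' : Finset ℤ) → 𝒜) → (Λ' → 𝒜) :=
    fun y v => y ⟨v.1, Finset.mem_union_right Λ v.2⟩ with hYdef
  set Z : (Λ' → 𝒜) → (C → 𝒜) := fun y' v => y' ⟨v.1, hC v.2⟩ with hZdef
  have hinj : ∀ i j, A i = A j → Y i = Y j → i = j := by
    intro i j hA hY
    funext v
    rcases Finset.mem_union.1 v.2 with hv | hv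
    · have := congrFun hA ⟨v.1, hv⟩
      simpa using this
    · have := congrFun hY ⟨v.1, hv⟩
      simpa using this
  have hqy : ∀ i, cylProb1 μ Λ' (fun v => i ⟨v.1, Finset.mem_union_right Λ v.2⟩)
      = ∑ j, if Y j = Y i then p j else 0 := by
    intro i
    rw [cylProb1_eq_sum μ (Finset.subset_union_right : Λ' ⊆ Λ ∪ Λ')]
    refine Finset.sum_congr rfl fun j _ => if_congr ?_ rfl rfl
    constructor
    · intro h; funext v; exact h v
    · intro h v; exact congrFun h v
  have hL : condEnt1 μ Λ Λ' = -∑ i, p i * Real.log (p i / ∑ j, if Y j = Y i then p j else 0) := by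
    unfold condEnt1
    congr 1
    refine Finset.sum_congr rfl fun i _ => ?_
    rw [← hqy i]
  have hpaz : ∀ i : ((Λ ∪ Λ' : Finset ℤ) → 𝒜),
      cylProb1 μ (Λ ∪ C) (fun v => i ⟨v.1, hUC v.2⟩)
      = ∑ j, if A j = A i ∧ Z (Y j) = Z (Y i) then p j else 0 := by
    intro i
    rw [cylProb1_eq_sum μ hUC]
    refine Finset.sum_congr rfl fun j _ => if_congr ?_ rfl rfl
    constructor
    · intro hcond
      constructor
      · funext v
        exact hcond ⟨v.1, Finset.mem_union_left C v.2⟩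
      · funext v
        exact hcond ⟨v.1, Finset.mem_union_right Λ v.2⟩
    · rintro ⟨h1, h2⟩ v
      rcases Finset.mem_union.1 v.2 with hv | hv
      · exact congrFun h1 ⟨v.1, hv⟩
      · exact congrFun h2 ⟨v.1, hv⟩
  have hqz : ∀ i : ((Λ ∪ Λ' : Finset ℤ) → 𝒜),
      cylProb1 μ C (fun v => i ⟨v.1, hCU v.2⟩)
      = ∑ j, if Z (Y j) = Z (Y i) then p j else 0 := by
    intro i
    rw [cylProb1_eq_sum μ hCU]
    refine Finset.sum_congr rfl fun j _ => if_congr ?_ rfl rfl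
    constructor
    · intro h; funext v; exact h v
    · intro h v; exact congrFun h v
  have hR : condEnt1 μ Λ C = -∑ i, p i * Real.log
      ((∑ j, if A j = A i ∧ Z (Y j) = Z (Y i) then p j else 0)
        / ∑ j, if Z (Y j) = Z (Y i) then p j else 0) := by
    unfold condEnt1
    congr 1
    rw [sum_cylProb1_mul μ hUC (fun w => Real.log (cylProb1 μ (Λ ∪ C) w /
      cylProb1 μ C (fun v => w ⟨v.1, Finset.mem_union_right Λ v.2⟩)))]
    refine Finset.sum_congr rfl fun i _ => ?_
    rw [← hpaz i]
    have : cylProb1 μ C (fun v => i ⟨v.1, hCU v.2⟩)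
        = cylProb1 μ C (fun v : C =>
            (fun vv : (Λ ∪ C : Finset ℤ) => i ⟨vv.1, hUC vv.2⟩) ⟨v.1, Finset.mem_union_right Λ v.2⟩) := rfl
    rw [← hqz i, this]
  rw [hL, hR]
  exact abstract_cond_mono p (fun i => cylProb1_nonneg μ _ i) A Y Z hinj

/-- conditional entropy of a single site is at most `log |𝒜|` -/
lemma condEnt1_singleton_le (x : ℤ) (Λ' : Finset ℤ) :
    condEnt1 μ {x} Λ' ≤ Real.log (Fintype.card 𝒜) := by
  have h1 : condEnt1 μ {x} Λ' ≤ condEnt1 μ {x} ∅ :=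
    condEnt1_mono μ {x} (Finset.empty_subset Λ')
  refine h1.trans ?_
  rw [condEnt1_eq, entS1_empty, Finset.union_empty, sub_zero]
  unfold entS1
  have hcard : Fintype.card (({x} : Finset ℤ) → 𝒜) = Fintype.card 𝒜 := by
    rw [Fintype.card_fun]
    simp
  have := neg_sum_mul_log_le_log_card (fun y : (({x} : Finset ℤ) → 𝒜) => cylProb1 μ {x} y)
    (fun y => cylProb1_nonneg μ _ y) (sum_cylProb1 μ {x})
  rw [hcard] at this
  exact this

lemma measurable_shift (a : ℤ) :
    Measurable (fun ω : ℤ → 𝒜 => fun i : ℤ => ω (i + a)) :=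
  measurable_pi_lambda _ fun i => measurable_pi_apply (i + a)

lemma map_shift (hinv : TransInv1 μ) (a : ℤ) :
    μ.map (fun ω : ℤ → 𝒜 => fun i : ℤ => ω (i + a)) = μ := by
  have hm1 : μ.map (fun ω : ℤ → 𝒜 => fun i : ℤ => ω (i + (-1))) = μ := by
    have hcomp : (fun ω : ℤ → 𝒜 => fun i : ℤ => ω (i + (-1))) ∘
        (fun ω : ℤ → 𝒜 => fun i : ℤ => ω (i + 1)) = id := by
      funext ω i
      simp
    calc μ.map (fun ω : ℤ → 𝒜 => fun i : ℤ => ω (i + (-1)))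
        = (μ.map (fun ω : ℤ → 𝒜 => fun i : ℤ => ω (i + 1))).map
            (fun ω : ℤ → 𝒜 => fun i : ℤ => ω (i + (-1))) := by rw [hinv]
      _ = μ.map ((fun ω : ℤ → 𝒜 => fun i : ℤ => ω (i + (-1))) ∘
            (fun ω : ℤ → 𝒜 => fun i : ℤ => ω (i + 1))) :=
          Measure.map_map (measurable_shift (-1)) (measurable_shift 1)
      _ = μ.map id := by rw [hcomp]
      _ = μ := Measure.map_id
  induction a using Int.induction_on with
  | zero =>
      have : (fun ω : ℤ → 𝒜 => fun i : ℤ => ω (i + 0)) = id := by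
        funext ω i; simp
      rw [this, Measure.map_id]
  | succ n ih =>
      have hcomp : (fun ω : ℤ → 𝒜 => fun i : ℤ => ω (i + ((n : ℤ) + 1)))
          = (fun ω : ℤ → 𝒜 => fun i : ℤ => ω (i + 1)) ∘
            (fun ω : ℤ → 𝒜 => fun i : ℤ => ω (i + (n : ℤ))) := by
        funext ω i
        simp only [Function.comp_apply]
        congr 1
        ring
      rw [hcomp, ← Measure.map_map (measurable_shift 1) (measurable_shift (n : ℤ)), ih, hinv]
  | pred n ih =>
      have hcomp : (fun ω : ℤ → 𝒜 => fun i : ℤ => ω (i + (-(n : ℤ) - 1)))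
          = (fun ω : ℤ → 𝒜 => fun i : ℤ => ω (i + (-1))) ∘
            (fun ω : ℤ → 𝒜 => fun i : ℤ => ω (i + (-(n : ℤ)))) := by
        funext ω i
        simp only [Function.comp_apply]
        congr 1
        ring
      rw [hcomp, ← Measure.map_map (measurable_shift (-1)) (measurable_shift (-(n : ℤ))), ih, hm1]

lemma cylProb1_shift (hinv : TransInv1 μ) (a : ℤ) (Λ : Finset ℤ)
    (x : (Λ.image (· + a) : Finset ℤ) → 𝒜) :
    cylProb1 μ (Λ.image (· + a)) x
      = cylProb1 μ Λ (fun v => x ⟨v.1 + a, Finset.mem_image_of_mem _ v.2⟩) := by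
  rw [cylProb1_def, cylProb1_def]
  have hset : cylSet (Λ.image (· + a)) x
      = (fun ω : ℤ → 𝒜 => fun i : ℤ => ω (i + a)) ⁻¹'
          cylSet Λ (fun v => x ⟨v.1 + a, Finset.mem_image_of_mem _ v.2⟩) := by
    ext ω
    constructor
    · intro hω v
      exact hω ⟨v.1 + a, Finset.mem_image_of_mem _ v.2⟩
    · intro hω w
      obtain ⟨v, hv, hva⟩ := Finset.mem_image.1 w.2
      have := hω ⟨v, hv⟩
      have hw : w = ⟨v + a, Finset.mem_image_of_mem _ hv⟩ := Subtype.ext hva.symm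
      rw [hw]
      exact this
  rw [hset, ← Measure.map_apply (measurable_shift a) (measurableSet_cylSet _ _), map_shift μ hinv a]

lemma entS1_shift (hinv : TransInv1 μ) (a : ℤ) (Λ : Finset ℤ) :
    entS1 μ (Λ.image (· + a)) = entS1 μ Λ := by
  unfold entS1
  congr 1
  have hbij : Function.Bijective
      (fun (x : (Λ.image (· + a) : Finset ℤ) → 𝒜) (v : Λ) =>
        x ⟨v.1 + a, Finset.mem_image_of_mem _ v.2⟩) := by
    rw [Fintype.bijective_iff_injective_and_card]
    constructor
    · intro x x' hxx'
      funext w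
      obtain ⟨v, hv, hva⟩ := Finset.mem_image.1 w.2
      have := congrFun hxx' ⟨v, hv⟩
      have hw : w = ⟨v + a, Finset.mem_image_of_mem _ hv⟩ := Subtype.ext hva.symm
      rw [hw]
      exact this
    · rw [Fintype.card_fun, Fintype.card_fun, Fintype.card_coe, Fintype.card_coe,
        Finset.card_image_of_injective Λ (add_left_injective a)]
  exact Fintype.sum_bijective _ hbij
    (fun x => cylProb1 μ (Λ.image (· + a)) x * Real.log (cylProb1 μ (Λ.image (· + a)) x))
    (fun y => cylProb1 μ Λ y * Real.log (cylProb1 μ Λ y))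
    (fun x => by beta_reduce; rw [cylProb1_shift μ hinv a Λ x])

lemma condEnt1_shift (hinv : TransInv1 μ) (a : ℤ) (Λ Λ' : Finset ℤ) :
    condEnt1 μ (Λ.image (· + a)) (Λ'.image (· + a)) = condEnt1 μ Λ Λ' := by
  rw [condEnt1_eq, condEnt1_eq, ← Finset.image_union, entS1_shift μ hinv, entS1_shift μ hinv]

lemma entS1_subadd (Λ Λ' : Finset ℤ) :
    entS1 μ (Λ ∪ Λ') ≤ entS1 μ Λ + entS1 μ Λ' := by
  have h1 : condEnt1 μ Λ Λ' ≤ condEnt1 μ Λ ∅ := condEnt1_mono μ Λ (Finset.empty_subset Λ')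
  have h2 : condEnt1 μ Λ ∅ = entS1 μ Λ := by
    rw [condEnt1_eq, entS1_empty, Finset.union_empty, sub_zero]
  have h3 := condEnt1_eq μ Λ Λ'
  linarith

/-- chain bound -/
lemma entS1_chain (C A : Finset ℤ) :
    entS1 μ (C ∪ A) ≤ entS1 μ C + ∑ x ∈ A, condEnt1 μ {x} (C ∪ A.filter (· < x)) := by
  induction A using Finset.induction_on_max with
  | empty => rw [Finset.union_empty]; simp
  | insert a s hs ih =>
      have ha : a ∉ s := fun h => lt_irrefl a (hs a h)
      have hu : C ∪ insert a s = {a} ∪ (C ∪ s) := by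
        rw [Finset.union_insert, Finset.insert_eq]
      have hchain : entS1 μ ({a} ∪ (C ∪ s)) = entS1 μ (C ∪ s) + condEnt1 μ {a} (C ∪ s) := by
        rw [condEnt1_eq]; ring
      have hfa : (insert a s).filter (· < a) = s := by
        ext x
        simp only [Finset.mem_filter, Finset.mem_insert]
        constructor
        · rintro ⟨hx | hx, hlt⟩
          · exact absurd hlt (by rw [hx]; exact lt_irrefl a)
          · exact hx
        · intro hx
          exact ⟨Or.inr hx, hs x hx⟩
      have hfx : ∀ x ∈ s, (insert a s).filter (· < x) = s.filter (· < x) := by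
        intro x hx
        ext z
        simp only [Finset.mem_filter, Finset.mem_insert]
        constructor
        · rintro ⟨hz | hz, hlt⟩
          · exact absurd hlt (by rw [hz]; exact not_lt.2 (le_of_lt (hs x hx)))
          · exact ⟨hz, hlt⟩
        · rintro ⟨hz, hlt⟩
          exact ⟨Or.inr hz, hlt⟩
      rw [hu, Finset.sum_insert ha, hfa]
      rw [Finset.sum_congr rfl fun x hx => by rw [hfx x hx]]
      calc entS1 μ ({a} ∪ (C ∪ s))
          = entS1 μ (C ∪ s) + condEnt1 μ {a} (C ∪ s) := hchain
        _ ≤ (entS1 μ C + ∑ x ∈ s, condEnt1 μ {x} (C ∪ s.filter (· < x)))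
              + condEnt1 μ {a} (C ∪ s) := by linarith
        _ = entS1 μ C + (condEnt1 μ {a} (C ∪ s) + ∑ x ∈ s, condEnt1 μ {x} (C ∪ s.filter (· < x))) := by
              ring

/-! ### Dyadic level sets -/

/-- sites in `[0,N)` divisible by `2^k` -/
noncomputable def levF (N : ℤ) (k : ℕ) : Finset ℤ := (Finset.Ico 0 N).filter (fun x => (2:ℤ)^k ∣ x)

/-- sites in `[0,N)` congruent to `2^(k-1)` mod `2^k` -/
noncomputable def levA (N : ℤ) (k : ℕ) : Finset ℤ := (Finset.Ico 0 N).filter (fun x => x % 2^k = 2^(k-1))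

lemma int_dyadic_split (k : ℕ) (x : ℤ) :
    (2:ℤ)^k ∣ x ↔ ((2:ℤ)^(k+1) ∣ x ∨ x % 2^(k+1) = 2^k) := by
  have hp : (0:ℤ) < 2^k := by positivity
  have h2p : ((2:ℤ)^(k+1)) = 2 * 2^k := by rw [pow_succ]; ring
  constructor
  · intro hdvd
    have hq := Int.mul_ediv_add_emod x (2^(k+1))
    have hr0 : 0 ≤ x % 2^(k+1) := Int.emod_nonneg x (by positivity)
    have hr1 : x % 2^(k+1) < 2^(k+1) := Int.emod_lt_of_pos x (by positivity)
    have hdvdr : (2:ℤ)^k ∣ x % 2^(k+1) := by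
      have hxe : x % 2^(k+1) = x - 2^(k+1) * (x / 2^(k+1)) := by linarith
      rw [hxe]
      exact dvd_sub hdvd (dvd_mul_of_dvd_left (pow_dvd_pow 2 (Nat.le_succ k)) _)
    obtain ⟨t, ht⟩ := hdvdr
    have ht0 : 0 ≤ t := by nlinarith
    have ht2 : t < 2 := by nlinarith
    interval_cases t
    · left
      exact Int.dvd_of_emod_eq_zero (by linarith)
    · right
      linarith
  · rintro (h | h)
    · exact dvd_trans (pow_dvd_pow 2 (Nat.le_succ k)) h
    · have hq := Int.mul_ediv_add_emod x (2^(k+1))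
      rw [h] at hq
      exact ⟨2 * (x / 2^(k+1)) + 1, by rw [h2p] at hq; ring_nf; ring_nf at hq; linarith⟩

lemma levF_zero (N : ℤ) : levF N 0 = Finset.Ico 0 N := by
  unfold levF
  refine Finset.filter_true_of_mem fun x _ => ?_
  simpa using one_dvd x

lemma levF_succ (N : ℤ) (k : ℕ) : levF N k = levF N (k + 1) ∪ levA N (k + 1) := by
  unfold levF levA
  ext x
  simp only [Finset.mem_union, Finset.mem_filter]
  have hk : (k + 1) - 1 = k := rfl
  rw [hk]
  constructor
  · rintro ⟨hx, hdvd⟩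
    rcases (int_dyadic_split k x).1 hdvd with h | h
    · exact Or.inl ⟨hx, h⟩
    · exact Or.inr ⟨hx, h⟩
  · rintro (⟨hx, h⟩ | ⟨hx, h⟩)
    · exact ⟨hx, (int_dyadic_split k x).2 (Or.inl h)⟩
    · exact ⟨hx, (int_dyadic_split k x).2 (Or.inr h)⟩

lemma levF_card (n : ℕ) (m : ℕ) :
    (levF ((n : ℤ) * 2 ^ m) m).card = n := by
  have him : levF ((n : ℤ) * 2 ^ m) m = (Finset.Ico (0:ℤ) n).image (· * 2 ^ m) := by
    unfold levF
    ext x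
    simp only [Finset.mem_filter, Finset.mem_Ico, Finset.mem_image]
    have hpow : (0:ℤ) < 2 ^ m := by positivity
    constructor
    · rintro ⟨⟨hx0, hxN⟩, hdvd⟩
      refine ⟨x / 2 ^ m, ⟨Int.ediv_nonneg hx0 (le_of_lt hpow), ?_⟩, Int.ediv_mul_cancel hdvd⟩
      have hxe : x / 2 ^ m * 2 ^ m = x := Int.ediv_mul_cancel hdvd
      by_contra hcon
      push_neg at hcon
      nlinarith [hxe]
    · rintro ⟨i, ⟨hi0, hin⟩, rfl⟩
      exact ⟨⟨mul_nonneg hi0 (le_of_lt hpow), by nlinarith⟩, dvd_mul_left _ i⟩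
  rw [him, Finset.card_image_of_injective _ (mul_left_injective₀ (by positivity : ((2:ℤ)^m) ≠ 0))]
  simp

lemma levA_card (n : ℕ) {m k : ℕ} (hk1 : 1 ≤ k) (hkm : k ≤ m) :
    (levA ((n : ℤ) * 2 ^ m) k).card = n * 2 ^ (m - k) := by
  have hpow : (0:ℤ) < 2 ^ k := by positivity
  have hsplit : (2:ℤ) ^ m = 2 ^ (m - k) * 2 ^ k := by
    rw [← pow_add]
    congr 1
    omega
  have hhalf : (2:ℤ) ^ (k - 1) < 2 ^ k := by
    apply pow_lt_pow_right₀ (by norm_num)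
    omega
  have hhalf0 : (0:ℤ) ≤ 2 ^ (k - 1) := by positivity
  have him : levA ((n : ℤ) * 2 ^ m) k
      = (Finset.Ico (0:ℤ) ((n : ℤ) * 2 ^ (m - k))).image (fun i => 2 ^ (k - 1) + i * 2 ^ k) := by
    unfold levA
    ext x
    simp only [Finset.mem_filter, Finset.mem_Ico, Finset.mem_image]
    constructor
    · rintro ⟨⟨hx0, hxN⟩, hmod⟩
      have hq := Int.mul_ediv_add_emod x (2 ^ k)
      rw [hmod] at hq
      refine ⟨x / 2 ^ k, ⟨Int.ediv_nonneg hx0 (le_of_lt hpow), ?_⟩, by linarith⟩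
      rw [hsplit] at hxN
      nlinarith [Int.ediv_nonneg hx0 (le_of_lt hpow)]
    · rintro ⟨i, ⟨hi0, hin⟩, rfl⟩
      have hxN : 2 ^ (k - 1) + i * 2 ^ k < (n : ℤ) * 2 ^ m := by
        rw [hsplit]
        nlinarith
      refine ⟨⟨by positivity, hxN⟩, ?_⟩
      rw [Int.add_mul_emod_self_right]
      exact Int.emod_eq_of_lt hhalf0 hhalf
  rw [him, Finset.card_image_of_injective]
  · rw [Int.card_Ico, sub_zero, show ((n:ℤ) * 2 ^ (m - k)) = ((n * 2 ^ (m - k) : ℕ) : ℤ) by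
      push_cast; ring, Int.toNat_natCast]
  · intro i j hij
    simp only [add_right_inj] at hij
    exact mul_left_injective₀ (ne_of_gt hpow) hij

lemma site_bound_top (hinv : TransInv1 μ) {m : ℕ}
    {B : Finset ℤ} (hB : (↑B : Set ℤ) ⊆ {x : ℤ | ∃ j : ℤ, j < 0 ∧ x = j * 2 ^ m})
    {N : ℤ} {x : ℤ} (hx : x ∈ levF N m)
    (hgood : ∀ b ∈ B, 0 ≤ b + x) :
    condEnt1 μ {x} ((levF N m).filter (· < x)) ≤ condEnt1 μ {0} B := by
  have hx' : (0 ≤ x ∧ x < N) ∧ (2:ℤ)^m ∣ x := by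
    simpa [levF, Finset.mem_filter, Finset.mem_Ico] using hx
  have hsub : B.image (· + x) ⊆ (levF N m).filter (· < x) := by
    intro y hy
    obtain ⟨b, hb, rfl⟩ := Finset.mem_image.1 hy
    obtain ⟨j, hj, hbj⟩ := hB hb
    have hbneg : b < 0 := by
      rw [hbj]
      exact mul_neg_of_neg_of_pos hj (by positivity)
    simp only [levF, Finset.mem_filter, Finset.mem_Ico]
    refine ⟨⟨⟨hgood b hb, by linarith [hx'.1.2]⟩, ?_⟩, by linarith⟩
    exact dvd_add (hbj ▸ dvd_mul_left _ j) hx'.2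
  calc condEnt1 μ {x} ((levF N m).filter (· < x))
      ≤ condEnt1 μ {x} (B.image (· + x)) := condEnt1_mono μ {x} hsub
    _ = condEnt1 μ {0} B := by
        have h0 : ({0} : Finset ℤ).image (· + x) = {x} := by
          rw [Finset.image_singleton, zero_add]
        rw [← h0, condEnt1_shift μ hinv x]

lemma site_bound_lev (hinv : TransInv1 μ) {k : ℕ}
    {Bk : Finset ℤ}
    (hBk : (↑Bk : Set ℤ) ⊆ ({x : ℤ | ∃ j : ℤ, j < 0 ∧ x = 2 ^ (k - 1) + j * 2 ^ k} ∪
          {x : ℤ | ∃ j : ℤ, x = j * 2 ^ k}))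
    {N : ℤ} {x : ℤ} (hx : x ∈ levA N k)
    (hgood : ∀ b ∈ Bk, 0 ≤ b + (x - 2 ^ (k - 1)) ∧ b + (x - 2 ^ (k - 1)) < N) :
    condEnt1 μ {x} (levF N k ∪ (levA N k).filter (· < x))
      ≤ condEnt1 μ {(2:ℤ) ^ (k - 1)} Bk := by
  have hx' : (0 ≤ x ∧ x < N) ∧ x % 2 ^ k = 2 ^ (k - 1) := by
    simpa [levA, Finset.mem_filter, Finset.mem_Ico] using hx
  have hkpos : (0:ℤ) < 2 ^ k := by positivity
  have hsub : Bk.image (· + (x - 2 ^ (k - 1))) ⊆ levF N k ∪ (levA N k).filter (· < x) := by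
    intro y hy
    obtain ⟨b, hb, rfl⟩ := Finset.mem_image.1 hy
    rcases hBk hb with ⟨j, hj, hbj⟩ | ⟨j, hbj⟩
    · -- same congruence class, strictly smaller
      refine Finset.mem_union_right _ ?_
      have heq : b + (x - 2 ^ (k - 1)) = x + j * 2 ^ k := by rw [hbj]; ring
      have hjneg : j * 2 ^ k < 0 := mul_neg_of_neg_of_pos hj hkpos
      simp only [levA, Finset.mem_filter, Finset.mem_Ico]
      refine ⟨⟨⟨(hgood b hb).1, (hgood b hb).2⟩, ?_⟩, by linarith [heq]⟩
      rw [heq, Int.add_mul_emod_self_right]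
      exact hx'.2
    · -- a multiple of 2^k
      refine Finset.mem_union_left _ ?_
      have hq := Int.mul_ediv_add_emod x (2 ^ k)
      rw [hx'.2] at hq
      have heq : b + (x - 2 ^ (k - 1)) = 2 ^ k * (j + x / 2 ^ k) := by
        rw [hbj]; ring_nf; ring_nf at hq; linarith
      simp only [levF, Finset.mem_filter, Finset.mem_Ico]
      exact ⟨⟨(hgood b hb).1, (hgood b hb).2⟩, ⟨j + x / 2 ^ k, heq⟩⟩
  calc condEnt1 μ {x} (levF N k ∪ (levA N k).filter (· < x))
      ≤ condEnt1 μ {x} (Bk.image (· + (x - 2 ^ (k - 1)))) := condEnt1_mono μ {x} hsub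
    _ = condEnt1 μ {(2:ℤ) ^ (k - 1)} Bk := by
        have h0 : ({(2:ℤ) ^ (k - 1)} : Finset ℤ).image (· + (x - 2 ^ (k - 1))) = {x} := by
          rw [Finset.image_singleton]
          congr 1
          ring
        rw [← h0, condEnt1_shift μ hinv (x - 2 ^ (k - 1))]

lemma log_card_nonneg : 0 ≤ Real.log (Fintype.card 𝒜) := by
  apply Real.log_nonneg
  have : 1 ≤ Fintype.card 𝒜 := Fintype.card_pos
  exact_mod_cast this

/-- sum over the top level -/
lemma sum_top (hinv : TransInv1 μ) {m : ℕ}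
    {B : Finset ℤ} (hB : (↑B : Set ℤ) ⊆ {x : ℤ | ∃ j : ℤ, j < 0 ∧ x = j * 2 ^ m})
    (n : ℕ) :
    ∑ x ∈ levF ((n:ℤ) * 2 ^ m) m,
        condEnt1 μ {x} ((levF ((n:ℤ) * 2 ^ m) m).filter (· < x))
      ≤ (n : ℝ) * condEnt1 μ {0} B
        + ((B.sup Int.natAbs : ℕ) : ℝ) * Real.log (Fintype.card 𝒜) := by
  set N : ℤ := (n:ℤ) * 2 ^ m with hN
  set RB : ℤ := ((B.sup Int.natAbs : ℕ) : ℤ) with hRB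
  set S0 : ℝ := condEnt1 μ {0} B with hS0
  set L : ℝ := Real.log (Fintype.card 𝒜) with hL
  have step1 : ∑ x ∈ levF N m, condEnt1 μ {x} ((levF N m).filter (· < x))
      ≤ ∑ x ∈ levF N m, (if RB ≤ x then S0 else L) := by
    refine Finset.sum_le_sum fun x hx => ?_
    split_ifs with hgood
    · refine site_bound_top μ hinv hB hx fun b hb => ?_
      have hble := Finset.le_sup (f := Int.natAbs) hb
      omega
    · exact condEnt1_singleton_le μ x _
  have step2 : ∑ x ∈ levF N m, (if RB ≤ x then S0 else L)
      = ((levF N m).filter (fun x => RB ≤ x)).card • S0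
        + ((levF N m).filter (fun x => ¬ RB ≤ x)).card • L := by
    rw [Finset.sum_ite, Finset.sum_const, Finset.sum_const]
  have hS0nn : 0 ≤ S0 := condEnt1_nonneg μ _ _
  have hLnn : 0 ≤ L := log_card_nonneg (𝒜 := 𝒜)
  have hgoodcard : ((levF N m).filter (fun x => RB ≤ x)).card ≤ n := by
    calc ((levF N m).filter (fun x => RB ≤ x)).card ≤ (levF N m).card :=
          Finset.card_filter_le _ _
      _ = n := levF_card n m
  have hbadcard : ((levF N m).filter (fun x => ¬ RB ≤ x)).card ≤ B.sup Int.natAbs := by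
    have hsub : (levF N m).filter (fun x => ¬ RB ≤ x) ⊆ Finset.Ico 0 RB := by
      intro x hx
      simp only [Finset.mem_filter, levF, Finset.mem_Ico, not_le] at hx ⊢
      exact ⟨hx.1.1.1, hx.2⟩
    calc ((levF N m).filter (fun x => ¬ RB ≤ x)).card ≤ (Finset.Ico (0:ℤ) RB).card :=
          Finset.card_le_card hsub
      _ = B.sup Int.natAbs := by rw [Int.card_Ico, sub_zero, hRB, Int.toNat_natCast]
  refine le_trans step1 (le_trans (le_of_eq step2) ?_)
  rw [nsmul_eq_mul, nsmul_eq_mul]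
  have h1 : (((levF N m).filter (fun x => RB ≤ x)).card : ℝ) * S0 ≤ (n : ℝ) * S0 := by
    apply mul_le_mul_of_nonneg_right _ hS0nn
    exact_mod_cast hgoodcard
  have h2 : (((levF N m).filter (fun x => ¬ RB ≤ x)).card : ℝ) * L
      ≤ ((B.sup Int.natAbs : ℕ) : ℝ) * L := by
    apply mul_le_mul_of_nonneg_right _ hLnn
    exact_mod_cast hbadcard
  linarith

/-- sum over level k -/
lemma sum_lev (hinv : TransInv1 μ) {m k : ℕ} (hk1 : 1 ≤ k) (hkm : k ≤ m)
    {Bk : Finset ℤ}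
    (hBk : (↑Bk : Set ℤ) ⊆ ({x : ℤ | ∃ j : ℤ, j < 0 ∧ x = 2 ^ (k - 1) + j * 2 ^ k} ∪
          {x : ℤ | ∃ j : ℤ, x = j * 2 ^ k}))
    (n : ℕ) :
    ∑ x ∈ levA ((n:ℤ) * 2 ^ m) k,
        condEnt1 μ {x} (levF ((n:ℤ) * 2 ^ m) k ∪ (levA ((n:ℤ) * 2 ^ m) k).filter (· < x))
      ≤ ((n : ℝ) * 2 ^ (m - k)) * condEnt1 μ {(2:ℤ) ^ (k - 1)} Bk
        + (((((Bk.sup Int.natAbs : ℕ) : ℤ) + 2 ^ (k - 1)).toNat : ℝ)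
              + ((Bk.sup Int.natAbs : ℕ) : ℝ))
            * Real.log (Fintype.card 𝒜) := by
  set N : ℤ := (n:ℤ) * 2 ^ m with hN
  set RK : ℤ := ((Bk.sup Int.natAbs : ℕ) : ℤ) with hRK
  set Sk : ℝ := condEnt1 μ {(2:ℤ) ^ (k - 1)} Bk with hSk
  set L : ℝ := Real.log (Fintype.card 𝒜) with hL
  have hRKnn : (0:ℤ) ≤ RK := by rw [hRK]; positivity
  have hhalf0 : (0:ℤ) ≤ 2 ^ (k - 1) := by positivity
  set good : ℤ → Prop := fun x => RK + 2 ^ (k - 1) ≤ x ∧ x + RK < N with hgooddef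
  have step1 : ∑ x ∈ levA N k, condEnt1 μ {x} (levF N k ∪ (levA N k).filter (· < x))
      ≤ ∑ x ∈ levA N k, (if good x then Sk else L) := by
    refine Finset.sum_le_sum fun x hx => ?_
    split_ifs with hgood
    · refine site_bound_lev μ hinv hBk hx fun b hb => ?_
      have hble := Finset.le_sup (f := Int.natAbs) hb
      constructor
      · have := hgood.1
        omega
      · have := hgood.2
        omega
    · exact condEnt1_singleton_le μ x _
  have step2 : ∑ x ∈ levA N k, (if good x then Sk else L)
      = ((levA N k).filter good).card • Sk
        + ((levA N k).filter (fun x => ¬ good x)).card • L := by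
    rw [Finset.sum_ite, Finset.sum_const, Finset.sum_const]
  have hSknn : 0 ≤ Sk := condEnt1_nonneg μ _ _
  have hLnn : 0 ≤ L := log_card_nonneg (𝒜 := 𝒜)
  have hgoodcard : ((levA N k).filter good).card ≤ n * 2 ^ (m - k) := by
    calc ((levA N k).filter good).card ≤ (levA N k).card := Finset.card_filter_le _ _
      _ = n * 2 ^ (m - k) := levA_card n hk1 hkm
  have hbadcard : ((levA N k).filter (fun x => ¬ good x)).card
      ≤ (RK + 2 ^ (k - 1)).toNat + Bk.sup Int.natAbs := by
    have hsub : (levA N k).filter (fun x => ¬ good x)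
        ⊆ Finset.Ico 0 (RK + 2 ^ (k - 1)) ∪ Finset.Ico (N - RK) N := by
      intro x hx
      simp only [Finset.mem_filter, levA, Finset.mem_Ico, not_and_or, not_le, not_lt,
        Finset.mem_union, hgooddef] at hx ⊢
      rcases hx.2 with h | h
      · exact Or.inl ⟨hx.1.1.1, h⟩
      · exact Or.inr ⟨by linarith [hx.1.1.2], hx.1.1.2⟩
    calc ((levA N k).filter (fun x => ¬ good x)).card
        ≤ (Finset.Ico (0:ℤ) (RK + 2 ^ (k - 1)) ∪ Finset.Ico (N - RK) N).card :=
          Finset.card_le_card hsub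
      _ ≤ (Finset.Ico (0:ℤ) (RK + 2 ^ (k - 1))).card + (Finset.Ico (N - RK) N).card :=
          Finset.card_union_le _ _
      _ = (RK + 2 ^ (k - 1)).toNat + Bk.sup Int.natAbs := by
          rw [Int.card_Ico, Int.card_Ico, sub_zero]
          congr 1
          rw [hRK]
          omega
  refine le_trans step1 (le_trans (le_of_eq step2) ?_)
  rw [nsmul_eq_mul, nsmul_eq_mul]
  have h1 : (((levA N k).filter good).card : ℝ) * Sk ≤ ((n:ℝ) * 2 ^ (m - k)) * Sk := by
    apply mul_le_mul_of_nonneg_right _ hSknn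
    have : ((n * 2 ^ (m - k) : ℕ) : ℝ) = (n:ℝ) * 2 ^ (m - k) := by push_cast; ring
    rw [← this]
    exact_mod_cast hgoodcard
  have h2 : (((levA N k).filter (fun x => ¬ good x)).card : ℝ) * L
      ≤ (((RK + 2 ^ (k - 1)).toNat + Bk.sup Int.natAbs : ℕ) : ℝ) * L := by
    apply mul_le_mul_of_nonneg_right _ hLnn
    exact_mod_cast hbadcard
  have hcast : (((RK + 2 ^ (k - 1)).toNat + Bk.sup Int.natAbs : ℕ) : ℝ)
      = (((RK + 2 ^ (k - 1)).toNat : ℝ) + ((Bk.sup Int.natAbs : ℕ) : ℝ)) := by push_cast; ring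
  rw [hcast] at h2
  linarith

lemma key_bound (hinv : TransInv1 μ) (m : ℕ)
    (B : Finset ℤ) (hB : (↑B : Set ℤ) ⊆ {x : ℤ | ∃ j : ℤ, j < 0 ∧ x = j * 2 ^ m})
    (Bk : ℕ → Finset ℤ)
    (hBk : ∀ k, 1 ≤ k → k ≤ m →
      (↑(Bk k) : Set ℤ) ⊆
        ({x : ℤ | ∃ j : ℤ, j < 0 ∧ x = 2 ^ (k - 1) + j * 2 ^ k} ∪
          {x : ℤ | ∃ j : ℤ, x = j * 2 ^ k})) :
    ∃ Cst : ℝ, 0 ≤ Cst ∧ ∀ n : ℕ,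
      entS1 μ (Finset.Ico (0:ℤ) ((n:ℤ) * 2 ^ m)) ≤
        ((n:ℝ) * 2 ^ m) * ((1 / 2 ^ m) * condEnt1 μ {0} B
          + ∑ k ∈ Finset.Icc 1 m, (1 / 2 ^ k : ℝ) * condEnt1 μ {(2:ℤ) ^ (k - 1)} (Bk k))
        + Cst := by
  classical
  set L : ℝ := Real.log (Fintype.card 𝒜) with hLdef
  have hLnn : 0 ≤ L := log_card_nonneg (𝒜 := 𝒜)
  set cB : ℝ := ((B.sup Int.natAbs : ℕ) : ℝ) with hcB
  set cj : ℕ → ℝ := fun j =>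
    (((((Bk j).sup Int.natAbs : ℕ) : ℤ) + 2 ^ (j - 1)).toNat : ℝ)
      + (((Bk j).sup Int.natAbs : ℕ) : ℝ) with hcj
  have hcjnn : ∀ j, 0 ≤ cj j := fun j => by rw [hcj]; positivity
  have hcBnn : 0 ≤ cB := by rw [hcB]; positivity
  refine ⟨(cB + ∑ j ∈ Finset.Icc 1 m, cj j) * L, ?_, ?_⟩
  · apply mul_nonneg _ hLnn
    have : 0 ≤ ∑ j ∈ Finset.Icc 1 m, cj j := Finset.sum_nonneg fun j _ => hcjnn j
    linarith
  intro n
  set N : ℤ := (n:ℤ) * 2 ^ m with hNdef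
  set S0 : ℝ := condEnt1 μ {0} B with hS0
  set Sk : ℕ → ℝ := fun j => condEnt1 μ {(2:ℤ) ^ (j - 1)} (Bk j) with hSkdef
  -- peel off the levels one at a time
  have hlev : ∀ k, k ≤ m → entS1 μ (Finset.Ico (0:ℤ) N) ≤ entS1 μ (levF N k)
      + ∑ j ∈ Finset.Icc 1 k, ∑ x ∈ levA N j,
          condEnt1 μ {x} (levF N j ∪ (levA N j).filter (· < x)) := by
    intro k
    induction k with
    | zero =>
        intro _
        rw [levF_zero]
        simp
    | succ k ih =>
        intro hk
        have h1 := ih (le_trans (Nat.le_succ k) hk)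
        have h2 : entS1 μ (levF N k) ≤ entS1 μ (levF N (k+1))
            + ∑ x ∈ levA N (k+1),
                condEnt1 μ {x} (levF N (k+1) ∪ (levA N (k+1)).filter (· < x)) := by
          rw [levF_succ]
          exact entS1_chain μ _ _
        rw [Finset.sum_Icc_succ_top (by omega : 1 ≤ k + 1)]
        linarith
  have hm' := hlev m le_rfl
  -- top level
  have htop : entS1 μ (levF N m)
      ≤ ∑ x ∈ levF N m, condEnt1 μ {x} ((levF N m).filter (· < x)) := by
    have h := entS1_chain μ ∅ (levF N m)
    rw [Finset.empty_union, entS1_empty] at h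
    have hcong : ∀ x ∈ levF N m,
        condEnt1 μ {x} (∅ ∪ (levF N m).filter (· < x))
          = condEnt1 μ {x} ((levF N m).filter (· < x)) := fun x _ => by
      rw [Finset.empty_union]
    rw [Finset.sum_congr rfl hcong] at h
    linarith
  have hsum_top := sum_top μ hinv hB n
  have hsum_lev : ∀ j ∈ Finset.Icc 1 m,
      ∑ x ∈ levA N j, condEnt1 μ {x} (levF N j ∪ (levA N j).filter (· < x))
        ≤ ((n : ℝ) * 2 ^ (m - j)) * Sk j + cj j * L := by
    intro j hj
    obtain ⟨hj1, hjm⟩ := Finset.mem_Icc.1 hj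
    exact sum_lev μ hinv hj1 hjm (hBk j hj1 hjm) n
  have hSig : ∑ j ∈ Finset.Icc 1 m, ∑ x ∈ levA N j,
      condEnt1 μ {x} (levF N j ∪ (levA N j).filter (· < x))
        ≤ ∑ j ∈ Finset.Icc 1 m, (((n : ℝ) * 2 ^ (m - j)) * Sk j + cj j * L) :=
    Finset.sum_le_sum hsum_lev
  -- arithmetic conversion of the counts
  have hpow_ne : ((2:ℝ) ^ m) ≠ 0 := by positivity
  have hconv : ∀ j ∈ Finset.Icc 1 m,
      ((n : ℝ) * 2 ^ (m - j)) * Sk j = ((n:ℝ) * 2 ^ m) * ((1 / 2 ^ j) * Sk j) := by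
    intro j hj
    obtain ⟨hj1, hjm⟩ := Finset.mem_Icc.1 hj
    have hpow : (2:ℝ) ^ (m - j) * 2 ^ j = 2 ^ m := by
      rw [← pow_add]
      congr 1
      omega
    have hpj : ((2:ℝ) ^ j) ≠ 0 := by positivity
    rw [← hpow]
    field_simp
  have hconv0 : (n : ℝ) * S0 = ((n:ℝ) * 2 ^ m) * ((1 / 2 ^ m) * S0) := by
    field_simp
  have hsplit : ∑ j ∈ Finset.Icc 1 m, (((n : ℝ) * 2 ^ (m - j)) * Sk j + cj j * L)
      = ((n:ℝ) * 2 ^ m) * (∑ j ∈ Finset.Icc 1 m, (1 / 2 ^ j : ℝ) * Sk j)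
        + (∑ j ∈ Finset.Icc 1 m, cj j) * L := by
    rw [Finset.sum_add_distrib, Finset.mul_sum, Finset.sum_mul]
    congr 1
    exact Finset.sum_congr rfl hconv
  have h3 := le_trans htop hsum_top
  rw [← hS0, ← hcB, ← hLdef] at h3
  have hmid : entS1 μ (Finset.Ico (0:ℤ) N)
      ≤ ((n : ℝ) * S0 + cB * L)
        + (((n:ℝ) * 2 ^ m) * (∑ j ∈ Finset.Icc 1 m, (1 / 2 ^ j : ℝ) * Sk j)
            + (∑ j ∈ Finset.Icc 1 m, cj j) * L) := by
    rw [← hsplit]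
    linarith
  rw [hconv0] at hmid
  have hSkfold : ∑ k ∈ Finset.Icc 1 m, (1 / 2 ^ k : ℝ) * condEnt1 μ {(2:ℤ) ^ (k - 1)} (Bk k)
      = ∑ j ∈ Finset.Icc 1 m, (1 / 2 ^ j : ℝ) * Sk j := by
    simp only [hSkdef]
  rw [hSkfold]
  have hrg : ((n:ℝ) * 2 ^ m) * ((1 / 2 ^ m) * S0
        + ∑ j ∈ Finset.Icc 1 m, (1 / 2 ^ j : ℝ) * Sk j)
      = ((n:ℝ) * 2 ^ m) * ((1 / 2 ^ m) * S0)
        + ((n:ℝ) * 2 ^ m) * (∑ j ∈ Finset.Icc 1 m, (1 / 2 ^ j : ℝ) * Sk j) := by ring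
  have hrg2 : (cB + ∑ j ∈ Finset.Icc 1 m, cj j) * L
      = cB * L + (∑ j ∈ Finset.Icc 1 m, cj j) * L := by ring
  rw [hrg, hrg2]
  linarith

lemma entS1_Ico_subadd (hinv : TransInv1 μ) :
    Subadditive (fun n : ℕ => entS1 μ (Finset.Ico (0:ℤ) (n:ℤ)) ) := by
  intro a b
  have hcast : ((a + b : ℕ) : ℤ) = (a:ℤ) + (b:ℤ) := by push_cast; ring
  simp only []
  rw [hcast]
  have hsplit : Finset.Ico (0:ℤ) ((a:ℤ) + b)
      = Finset.Ico 0 (a:ℤ) ∪ Finset.Ico (a:ℤ) ((a:ℤ) + b) :=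
    (Finset.Ico_union_Ico_eq_Ico (by positivity)
      (le_add_of_nonneg_right (by positivity))).symm
  rw [hsplit]
  refine le_trans (entS1_subadd μ _ _) ?_
  have him : Finset.Ico (a:ℤ) ((a:ℤ) + b) = (Finset.Ico (0:ℤ) (b:ℤ)).image (· + (a:ℤ)) := by
    rw [Finset.image_add_right_Ico, zero_add, add_comm (b:ℤ) (a:ℤ)]
  rw [him, entS1_shift μ hinv]

end Basics

/-- finite-window upper bound. For a translation invariant probability
measure `μ` on `𝒜^ℤ`, `m ≥ 1`, any finite `B ⊆ G_m^-` and, for `1 ≤ k ≤ m`, any finite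
`B_k ⊆ ({2^{k−1}} + G_k^-) ∪ G_k`, the entropy density satisfies
`s_μ ≤ (1/2^m)·S({0} | B) + Σ_{k=1}^m (1/2^k)·S({2^{k−1}} | B_k)`. -/
theorem entropy_density_hierarchical_upper_bound {𝒜 : Type*} [Fintype 𝒜] [Nonempty 𝒜]
    [MeasurableSpace 𝒜] [MeasurableSingletonClass 𝒜]
    (μ : Measure (ℤ → 𝒜)) [IsProbabilityMeasure μ] (hinv : TransInv1 μ)
    (m : ℕ) (hm : 1 ≤ m)
    (B : Finset ℤ) (hB : (↑B : Set ℤ) ⊆ {x : ℤ | ∃ j : ℤ, j < 0 ∧ x = j * 2 ^ m})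
    (Bk : ℕ → Finset ℤ)
    (hBk : ∀ k, 1 ≤ k → k ≤ m →
      (↑(Bk k) : Set ℤ) ⊆
        ({x : ℤ | ∃ j : ℤ, j < 0 ∧ x = 2 ^ (k - 1) + j * 2 ^ k} ∪
          {x : ℤ | ∃ j : ℤ, x = j * 2 ^ k})) :
    ∃ s : ℝ,
      Filter.Tendsto (fun n : ℕ => entS1 μ (Finset.Ico (0 : ℤ) (n : ℤ)) / (n : ℝ))
        Filter.atTop (nhds s) ∧
      s ≤ (1 / 2 ^ m) * condEnt1 μ {0} B +
        ∑ k ∈ Finset.Icc 1 m, (1 / 2 ^ k : ℝ) * condEnt1 μ {(2 : ℤ) ^ (k - 1)} (Bk k) := by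
  classical
  have hsub : Subadditive (fun n : ℕ => entS1 μ (Finset.Ico (0:ℤ) (n:ℤ))) :=
    entS1_Ico_subadd μ hinv
  have hbdd : BddBelow (Set.range fun n : ℕ => entS1 μ (Finset.Ico (0:ℤ) (n:ℤ)) / n) := by
    refine ⟨0, ?_⟩
    rintro r ⟨n, rfl⟩
    exact div_nonneg (entS1_nonneg μ _) (Nat.cast_nonneg n)
  have htends := hsub.tendsto_lim hbdd
  refine ⟨hsub.lim, htends, ?_⟩
  obtain ⟨Cst, hCst0, hCst⟩ := key_bound μ hinv m B hB Bk hBk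
  set R : ℝ := (1 / 2 ^ m) * condEnt1 μ {0} B +
      ∑ k ∈ Finset.Icc 1 m, (1 / 2 ^ k : ℝ) * condEnt1 μ {(2:ℤ) ^ (k - 1)} (Bk k) with hR
  have hmono : Filter.Tendsto (fun n : ℕ => n * 2 ^ m) Filter.atTop Filter.atTop := by
    apply Filter.tendsto_atTop_atTop_of_monotone
    · intro x y hxy
      exact Nat.mul_le_mul_right _ hxy
    · intro b
      refine ⟨b, ?_⟩
      calc b = b * 1 := (mul_one b).symm
        _ ≤ b * 2 ^ m := Nat.mul_le_mul_left b Nat.one_le_two_pow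
  have hcomp : Filter.Tendsto
      ((fun n : ℕ => entS1 μ (Finset.Ico (0:ℤ) (n:ℤ)) / (n:ℝ)) ∘ (fun n : ℕ => n * 2 ^ m))
      Filter.atTop (nhds hsub.lim) := htends.comp hmono
  have h2m : (1:ℝ) ≤ 2 ^ m := one_le_pow₀ (by norm_num)
  have hbound : ((fun n : ℕ => entS1 μ (Finset.Ico (0:ℤ) (n:ℤ)) / (n:ℝ))
        ∘ (fun n : ℕ => n * 2 ^ m)) ≤ᶠ[Filter.atTop] (fun n : ℕ => R + Cst / n) := by
    filter_upwards [Filter.eventually_ge_atTop 1] with n hn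
    simp only [Function.comp_apply]
    have hn1 : (1:ℝ) ≤ (n:ℝ) := by exact_mod_cast hn
    have hD : (0:ℝ) < (n:ℝ) * 2 ^ m := by nlinarith
    have hks := hCst n
    have hcastZ : ((n * 2 ^ m : ℕ) : ℤ) = (n:ℤ) * 2 ^ m := by push_cast; ring
    have hcastR : ((n * 2 ^ m : ℕ) : ℝ) = (n:ℝ) * 2 ^ m := by push_cast; ring
    rw [hcastZ, hcastR, div_le_iff₀ hD]
    have hexp : (R + Cst / (n:ℝ)) * ((n:ℝ) * 2 ^ m)
        = R * ((n:ℝ) * 2 ^ m) + Cst * 2 ^ m := by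
      field_simp
    rw [hexp]
    nlinarith [hks, hCst0, h2m]
  have htendsR : Filter.Tendsto (fun n : ℕ => R + Cst / (n:ℝ)) Filter.atTop (nhds R) := by
    have hz := tendsto_const_div_atTop_nhds_zero_nat Cst
    have := Filter.Tendsto.add (tendsto_const_nhds (x := R) (f := Filter.atTop)) hz
    simpa using this
  exact le_of_tendsto_of_tendsto hcomp htendsR hbound
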